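/- If q is a two-dimensional move that is horizontally valid or vertically valid, then its profile satisfies q̂(α,β) ≥ 0 for all α, β ∈ [1,∞]. -/

import Mathlib

open scoped BigOperators Classical

noncomputable section

/-- The profile `P_x` of a point `x ∈ ℝ≥0`, viewed as a function on `[1,∞]`
(the extended reals `EReal` model the interval with its point `∞ = ⊤`):
`P_x(α) = 1` for `α ∈ [1,2)`, `P_x(α) = (xα - x)/(x + α - 2)` for `α ∈ [2,∞)`,
and `P_x(∞) = x` (with the conventions `P_0(α) = 0` for `α ∈ [2,∞]`, which the
formula also yields since division by zero is zero). -/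
def Pfun (x : ℝ) (α : EReal) : ℝ :=
  if α = ⊤ then x
  else if α.toReal < 2 then 1
  else (x * α.toReal - x) / (x + α.toReal - 2)

/-- A one-dimensional move: a finitely supported function on `ℝ≥0`
(modeled as a function on `ℝ` vanishing on the negatives). -/
def IsMove1 (f : ℝ → ℝ) : Prop :=
  (Function.support f).Finite ∧ ∀ x : ℝ, x < 0 → f x = 0

/-- Validity of a one-dimensional move. -/
def IsValid1 (f : ℝ → ℝ) : Prop :=
  (∑ᶠ x, f x) = 0 ∧
  (∀ lam : ℝ, 0 < lam → 0 ≤ ∑ᶠ x, (x / (x + lam)) * f x) ∧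
  0 ≤ ∑ᶠ x, x * f x

/-- The profile of a one-dimensional move. -/
def prof1 (f : ℝ → ℝ) (α : EReal) : ℝ := ∑ᶠ x, f x * Pfun x α

/-- A two-dimensional move: a finitely supported function on `ℝ≥0 × ℝ≥0`. -/
def IsMove2 (q : ℝ × ℝ → ℝ) : Prop :=
  (Function.support q).Finite ∧ ∀ p : ℝ × ℝ, p.1 < 0 ∨ p.2 < 0 → q p = 0

/-- A two-dimensional move is horizontally valid if all of its rows are valid. -/
def HorizValid (q : ℝ × ℝ → ℝ) : Prop := ∀ y : ℝ, IsValid1 fun x => q (x, y)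

/-- A two-dimensional move is vertically valid if all of its columns are valid. -/
def VertValid (q : ℝ × ℝ → ℝ) : Prop := ∀ x : ℝ, IsValid1 fun y => q (x, y)

/-- The two-variable profile of a two-dimensional move. -/
def prof2 (q : ℝ × ℝ → ℝ) (α β : EReal) : ℝ :=
  ∑ᶠ p : ℝ × ℝ, q p * Pfun p.1 α * Pfun p.2 β

/-- The transpose move `qᵀ(x,y) = q(y,x)`. -/
def transpose (q : ℝ × ℝ → ℝ) : ℝ × ℝ → ℝ := fun p => q (p.2, p.1)

/-- `pt x y` is the indicator move `⟦x,y⟧`. -/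
def pt (x y : ℝ) : ℝ × ℝ → ℝ := fun p => if p = (x, y) then 1 else 0

/-- The move `t_τ = 2·⟦1,1⟧ - ⟦2-τ,0⟧ - ⟦0,2-τ⟧`. -/
def tMove (τ : ℝ) : ℝ × ℝ → ℝ :=
  fun p => 2 * pt 1 1 p - pt (2 - τ) 0 p - pt 0 (2 - τ) p

/-- `slice g b` is the move `g_b`: the part of `g` on the horizontal line `y = b`. -/
def hslice (g : ℝ × ℝ → ℝ) (b : ℝ) : ℝ × ℝ → ℝ := fun p => if p.2 = b then g p else 0

lemma Pfun_nonneg {x : ℝ} (hx : 0 ≤ x) (α : EReal) : 0 ≤ Pfun x α := by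
  unfold Pfun
  split_ifs with h1 h2
  · exact hx
  · norm_num
  · push_neg at h2
    apply div_nonneg
    · nlinarith
    · linarith

lemma f0_nonpos {f : ℝ → ℝ} (hm : IsMove1 f) (hv : IsValid1 f) : f 0 ≤ 0 := by
  obtain ⟨hfin, hneg⟩ := hm
  set F := hfin.toFinset with hF
  have hsub : Function.support f ⊆ ↑F := by simp [hF]
  have hsum : ∀ lam : ℝ, 0 < lam → 0 ≤ ∑ x ∈ F, (x / (x + lam)) * f x := by
    intro lam hlam
    have h := hv.2.1 lam hlam
    rwa [finsum_eq_sum_of_support_subset _ (fun x hx => hsub (by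
      intro h0
      simp [h0] at hx))] at h
  have htend : Filter.Tendsto (fun lam => ∑ x ∈ F, (x / (x + lam)) * f x)
      (nhdsWithin 0 (Set.Ioi 0)) (nhds (∑ x ∈ F, (if 0 < x then f x else 0))) := by
    apply tendsto_finset_sum
    intro x _
    rcases lt_trichotomy x 0 with h | h | h
    · have hx0 : f x = 0 := hneg x h
      simp [hx0]
    · subst h
      simp only [if_neg (lt_irrefl (0:ℝ)), zero_div, zero_mul]
      exact tendsto_const_nhds
    · simp only [if_pos h]
      have hc : ContinuousAt (fun lam : ℝ => (x / (x + lam)) * f x) 0 := by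
        apply ContinuousAt.mul _ continuousAt_const
        apply ContinuousAt.div continuousAt_const (by fun_prop)
        simpa using ne_of_gt h
      have := hc.continuousWithinAt (s := Set.Ioi 0)
      have h2 := this.tendsto
      simpa [ne_of_gt h] using h2
  have h1 : 0 ≤ ∑ x ∈ F, (if 0 < x then f x else 0) :=
    ge_of_tendsto htend (eventually_nhdsWithin_of_forall fun lam hlam =>
      hsum lam hlam)
  have hsumF : ∑ x ∈ F, f x = 0 := by
    rw [← finsum_eq_sum_of_support_subset _ hsub]
    exact hv.1
  have hdiff : ∑ x ∈ F, (if 0 < x then f x else 0) = ∑ x ∈ F, f x - f 0 := by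
    have : ∀ x ∈ F, (if 0 < x then f x else 0) = f x - (if x = 0 then f 0 else 0) := by
      intro x _
      rcases lt_trichotomy x 0 with h | h | h
      · simp [not_lt.2 h.le, ne_of_lt h, hneg x h]
      · simp [h]
      · simp [h, ne_of_gt h]
    rw [Finset.sum_congr rfl this, Finset.sum_sub_distrib, Finset.sum_ite_eq' F 0 (fun _ => f 0)]
    by_cases h0 : (0:ℝ) ∈ F
    · simp [h0]
    · have : f 0 = 0 := by
        by_contra hc
        exact h0 (hfin.mem_toFinset.2 hc)
      simp [h0, this]
  rw [hdiff, hsumF] at h1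
  linarith

lemma prof1_nonneg {f : ℝ → ℝ} (hm : IsMove1 f) (hv : IsValid1 f) (α : EReal) :
    0 ≤ prof1 f α := by
  by_cases htop : α = ⊤
  · subst htop
    have : prof1 f ⊤ = ∑ᶠ x, x * f x := by
      apply finsum_congr
      intro x
      simp [Pfun, mul_comm]
    rw [this]
    exact hv.2.2
  · set a := α.toReal with ha
    rcases lt_trichotomy a 2 with hlt | heq | hgt
    · have : prof1 f α = ∑ᶠ x, f x := by
        apply finsum_congr
        intro x
        simp [Pfun, htop, show α.toReal < 2 from hlt]
      rw [this, hv.1]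
    · -- a = 2 : prof1 f α = - f 0
      have hP : ∀ x : ℝ, Pfun x α = if x = 0 then 0 else 1 := by
        intro x
        unfold Pfun
        rw [if_neg htop, if_neg (by rw [← ha, heq]; norm_num), ← ha, heq]
        by_cases hx : x = 0
        · simp [hx]
        · rw [if_neg hx]
          have : x * 2 - x = x := by ring
          rw [this]
          have : x + 2 - 2 = x := by ring
          rw [this, div_self hx]
      have key : prof1 f α = ∑ᶠ x, (f x - if x = 0 then f 0 else 0) := by
        apply finsum_congr
        intro x
        rw [hP x]
        by_cases hx : x = 0
        · simp [hx]
        · simp [hx]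
      rw [key]
      have hfin2 : (Function.support fun x : ℝ => if x = 0 then f 0 else 0).Finite :=
        Set.Finite.subset (Set.finite_singleton 0) (by
          intro x hx
          simp only [Function.mem_support] at hx
          have hx0 : x = 0 := by by_contra hc; simp [hc] at hx
          simp [hx0])
      rw [finsum_sub_distrib hm.1 hfin2, hv.1,
        finsum_eq_single _ (0:ℝ) (fun x hx => by simp [hx])]
      have h0 := f0_nonpos hm hv
      have hif : (if (0:ℝ) = 0 then f 0 else 0) = f 0 := if_pos rfl
      rw [hif]
      linarith
    · -- a > 2
      set lam := a - 2 with hlam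
      have hlam0 : 0 < lam := by simp [hlam]; linarith
      have key : ∀ x, f x * Pfun x α = (a - 1) * ((x / (x + lam)) * f x) := by
        intro x
        by_cases hfx : f x = 0
        · simp [hfx]
        · have hx0 : 0 ≤ x := le_of_not_gt fun h => hfx (hm.2 x h)
          have hden : x + a - 2 ≠ 0 := by intro hc; nlinarith
          unfold Pfun
          rw [if_neg htop, if_neg (not_lt.2 (by rw [← ha]; linarith)), ← ha]
          have hxl : x + lam = x + a - 2 := by rw [hlam]; ring
          rw [hxl]
          field_simp
      have hfin2 : (Function.support fun x : ℝ => (x / (x + lam)) * f x).Finite :=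
        Set.Finite.subset hm.1 (by
          intro x hx
          simp only [Function.mem_support] at hx ⊢
          intro h0
          simp [h0] at hx)
      calc (0:ℝ) ≤ (a - 1) * ∑ᶠ x, (x / (x + lam)) * f x :=
            mul_nonneg (by linarith) (hv.2.1 lam hlam0)
        _ = ∑ᶠ x, (a - 1) * ((x / (x + lam)) * f x) := mul_finsum _ _
        _ = prof1 f α := (finsum_congr key).symm

lemma transpose_isMove2 {q : ℝ × ℝ → ℝ} (h : IsMove2 q) : IsMove2 (transpose q) := by
  constructor
  · have hsub : Function.support (transpose q) ⊆ Prod.swap ⁻¹' (Function.support q) := by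
      intro p hp
      exact hp
    exact Set.Finite.subset (h.1.preimage Prod.swap_injective.injOn) hsub
  · rintro p (h1 | h2)
    · exact h.2 (p.2, p.1) (Or.inr h1)
    · exact h.2 (p.2, p.1) (Or.inl h2)

lemma prof2_transpose (q : ℝ × ℝ → ℝ) (α β : EReal) :
    prof2 q α β = prof2 (transpose q) β α := by
  rw [prof2, prof2, ← finsum_comp_equiv (Equiv.prodComm ℝ ℝ)]
  apply finsum_congr
  intro p
  simp only [Equiv.prodComm_apply, Prod.swap, transpose]
  ring

lemma prof2_nonneg_horiz {q : ℝ × ℝ → ℝ} (hmove : IsMove2 q) (hq : HorizValid q)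
    (α β : EReal) : 0 ≤ prof2 q α β := by
  obtain ⟨hfin, hneg⟩ := hmove
  classical
  set S := hfin.toFinset with hS
  set A := S.image Prod.fst with hA
  set B := S.image Prod.snd with hB
  have hmemS : ∀ p : ℝ × ℝ, q p ≠ 0 → p ∈ S := fun p hp => hfin.mem_toFinset.2 hp
  have hAB : Function.support (fun p : ℝ × ℝ => q p * Pfun p.1 α * Pfun p.2 β)
      ⊆ ↑(A ×ˢ B) := by
    intro p hp
    have hqp : q p ≠ 0 := by
      intro h0
      simp only [Function.mem_support, h0, zero_mul] at hp
      exact hp rfl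
    have hpS := hmemS p hqp
    exact Finset.mem_coe.2 (Finset.mem_product.2
      ⟨Finset.mem_image_of_mem _ hpS, Finset.mem_image_of_mem _ hpS⟩)
  rw [prof2, finsum_eq_sum_of_support_subset _ hAB, Finset.sum_product_right]
  apply Finset.sum_nonneg
  intro y hy
  have hy0 : 0 ≤ y := by
    obtain ⟨p, hpS, rfl⟩ := Finset.mem_image.1 hy
    by_contra hc
    push_neg at hc
    exact Function.mem_support.1 (hfin.mem_toFinset.1 hpS) (hneg p (Or.inr hc))
  have hrowmove : IsMove1 (fun x => q (x, y)) := by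
    constructor
    · apply Set.Finite.subset A.finite_toSet
      intro x hx
      have hx' : q (x, y) ≠ 0 := hx
      exact Finset.mem_coe.2 (Finset.mem_image_of_mem _ (hmemS (x, y) hx'))
    · intro x hx
      exact hneg (x, y) (Or.inl hx)
  have hrow := prof1_nonneg hrowmove (hq y) α
  have hrow_eq : prof1 (fun x => q (x, y)) α = ∑ x ∈ A, q (x, y) * Pfun x α := by
    apply finsum_eq_sum_of_support_subset
    intro x hx
    have hx' : q (x, y) ≠ 0 := by
      intro h0
      simp only [Function.mem_support, h0, zero_mul] at hx
      exact hx rfl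
    exact Finset.mem_coe.2 (Finset.mem_image_of_mem _ (hmemS (x, y) hx'))
  have hfactor : ∑ x ∈ A, q (x, y) * Pfun x α * Pfun y β
      = (∑ x ∈ A, q (x, y) * Pfun x α) * Pfun y β := (Finset.sum_mul _ _ _).symm
  rw [hfactor, ← hrow_eq]
  exact mul_nonneg hrow (Pfun_nonneg hy0 β)


/-- The profile of a horizontally or vertically valid move is nonnegative on
`[1,∞] × [1,∞]`. -/
theorem stmt_3 (q : ℝ × ℝ → ℝ) (hmove : IsMove2 q)
    (h : HorizValid q ∨ VertValid q) :
    ∀ α β : EReal, ((1 : ℝ) : EReal) ≤ α → ((1 : ℝ) : EReal) ≤ β →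
      0 ≤ prof2 q α β := by
  intro α β _ _
  rcases h with hh | hv
  · exact prof2_nonneg_horiz ⟨hmove.1, hmove.2⟩ hh α β
  · rw [prof2_transpose q α β]
    exact prof2_nonneg_horiz (transpose_isMove2 hmove) (fun y => hv y) β α
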